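/- Let k ≥ 1 and n ≥ 1 be integers and let M be the k×k matrix over R with rows and columns indexed by 0,…,k−1 whose (i,j) entry is G(n+k−1+j−i, i), where for natural numbers N and a, G(N, a) = Σ_c ∏_{l=1}^m z_{c_l} · q^{a + p_{l−1}}, the sum being over all compositions c = (c_1,…,c_m) of N with parts in {1,…,k}. Then det M = ε · z_k^{n+k−1} · q^{C(n+k−1,2)}, where C(N,2) = N(N−1)/2, ε = 1 if k is odd, and ε = (−1)^{n−1} if k is even. -/

import Mathlib

/-- The generating polynomial of the major index over layered permutations, shifted by
a board of length `a` appended to the beginning: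
`G(N,a) = Σ_c ∏_{l=1}^m z_{c_l} · q^(a + p_{l-1})`, the sum over all compositions
`c = (c_1,…,c_m)` of `N` with parts in `{1,…,k}`, where `p_l` are the partial sums. -/
def majGenPoly {R : Type*} [CommRing R] (k : ℕ) (q : R) (z : ℕ → R) (N a : ℕ) : R :=
  ∑ c ∈ Finset.univ.filter (fun c : Composition N => ∀ i ∈ c.blocks, i ≤ k),
    ∏ l ∈ Finset.range c.length,
      z (c.blocks.getD l 0) * q ^ (a + c.sizeUpTo l)

open Finset

section aux

variable {R : Type*} [CommRing R]

private lemma composition_blocks_ne_nil {N : ℕ} (hN : 1 ≤ N) (c : Composition N) :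
    c.blocks ≠ [] := by
  intro h
  have hs := c.blocks_sum
  rw [h] at hs
  simp at hs
  omega

private lemma composition_zero_blocks (c : Composition 0) : c.blocks = [] := by
  cases h : c.blocks with
  | nil => rfl
  | cons b l =>
    have hb : 0 < b := c.blocks_pos (by rw [h]; exact List.mem_cons_self)
    have hs := c.blocks_sum
    rw [h, List.sum_cons] at hs
    omega

private lemma majGenPoly_zero (k : ℕ) (q : R) (z : ℕ → R) (a : ℕ) :
    majGenPoly k q z 0 a = 1 := by
  rw [majGenPoly]
  have h1 : (univ.filter fun c : Composition 0 => ∀ i ∈ c.blocks, i ≤ k) = univ := by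
    apply filter_true_of_mem
    intro c _ i hi
    rw [composition_zero_blocks] at hi
    simp at hi
  rw [h1]
  have h2 : ∀ c : Composition 0, c.length = 0 := fun c => by
    simp [Composition.length, composition_zero_blocks]
  have h3 : ∀ c ∈ (univ : Finset (Composition 0)),
      (∏ l ∈ Finset.range c.length, z (c.blocks.getD l 0) * q ^ (a + c.sizeUpTo l)) = 1 := by
    intro c _
    rw [h2 c]
    simp
  rw [Finset.sum_congr rfl h3]
  simp [Finset.card_univ, composition_card]

/-- `majGenPoly` extended to an integer first argument, `0` for negative values. -/
private def mgZ (k : ℕ) (q : R) (z : ℕ → R) (N : ℤ) (a : ℕ) : R :=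
  if 0 ≤ N then majGenPoly k q z N.toNat a else 0

private lemma mgZ_ofNat (k : ℕ) (q : R) (z : ℕ → R) (N a : ℕ) :
    mgZ k q z (N : ℤ) a = majGenPoly k q z N a := by simp [mgZ]

private lemma mgZ_neg (k : ℕ) (q : R) (z : ℕ → R) {N : ℤ} (a : ℕ) (hN : N < 0) :
    mgZ k q z N a = 0 := by simp [mgZ, not_le.2 hN]

/-- Removing the first block of a composition. -/
private def compTail {N : ℕ} (hN : 1 ≤ N) (c : Composition N) :
    Composition (N - c.blocks.headI) where
  blocks := c.blocks.tail
  blocks_pos := fun hi => c.blocks_pos (List.mem_of_mem_tail hi)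
  blocks_sum := by
    obtain ⟨b, l, hb⟩ := List.exists_cons_of_ne_nil (composition_blocks_ne_nil hN c)
    have hs := c.blocks_sum
    rw [hb] at hs ⊢
    simp only [List.sum_cons] at hs
    simp only [List.tail_cons, List.headI]
    omega

/-- Adding a first block to a composition. -/
private def compCons {N t : ℕ} (ht : 1 ≤ t) (htN : t ≤ N) (c : Composition (N - t)) :
    Composition N where
  blocks := t :: c.blocks
  blocks_pos := by
    intro i hi
    rcases List.mem_cons.1 hi with h | h
    · omega
    · exact c.blocks_pos h
  blocks_sum := by
    have hs := c.blocks_sum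
    simp only [List.sum_cons, hs]
    omega

private lemma prod_aux (q : R) (z : ℕ → R) (a hd : ℕ) (tl : List ℕ) :
    (∏ l ∈ Finset.range (hd :: tl).length,
      z ((hd :: tl).getD l 0) * q ^ (a + ((hd :: tl).take l).sum))
    = z hd * q ^ a * ∏ l ∈ Finset.range tl.length,
        z (tl.getD l 0) * q ^ (a + hd + (tl.take l).sum) := by
  rw [List.length_cons, Finset.prod_range_succ', mul_comm]
  congr 1
  exact Finset.prod_congr rfl fun m _ => by
    simp [List.take_succ_cons, add_assoc]

private lemma prod_aux2 (q : R) (z : ℕ → R) (a : ℕ)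
    {N N' : ℕ} (c : Composition N) (c' : Composition N') (b : ℕ) (l : List ℕ)
    (hb : c.blocks = b :: l) (hb' : c'.blocks = l) :
    (∏ m ∈ Finset.range c.length, z (c.blocks.getD m 0) * q ^ (a + c.sizeUpTo m))
      = z b * q ^ a * ∏ m ∈ Finset.range c'.length,
          z (c'.blocks.getD m 0) * q ^ (a + b + c'.sizeUpTo m) := by
  have e1 : c.length = (b :: l).length := by rw [Composition.length, hb]
  have e2 : c'.length = l.length := by rw [Composition.length, hb']
  rw [e1, e2]
  calc (∏ m ∈ Finset.range (b :: l).length, z (c.blocks.getD m 0) * q ^ (a + c.sizeUpTo m))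
      = ∏ m ∈ Finset.range (b :: l).length,
          z ((b :: l).getD m 0) * q ^ (a + ((b :: l).take m).sum) :=
        Finset.prod_congr rfl fun m _ => by rw [Composition.sizeUpTo, hb]
    _ = z b * q ^ a * ∏ m ∈ Finset.range l.length,
          z (l.getD m 0) * q ^ (a + b + (l.take m).sum) := prod_aux q z a b l
    _ = z b * q ^ a * ∏ m ∈ Finset.range l.length,
          z (c'.blocks.getD m 0) * q ^ (a + b + c'.sizeUpTo m) := by
        refine congrArg _ (Finset.prod_congr rfl fun m _ => ?_)
        rw [Composition.sizeUpTo, hb']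

/-- The first-block recurrence for `majGenPoly`, restricted form. -/
private lemma majGenPoly_rec' (k : ℕ) (q : R) (z : ℕ → R) (N a : ℕ) (hN : 1 ≤ N) :
    majGenPoly k q z N a =
      ∑ t ∈ Icc 1 (min k N), z t * q ^ a * majGenPoly k q z (N - t) (a + t) := by
  have hrw : ∀ t ∈ Icc 1 (min k N),
      z t * q ^ a * majGenPoly k q z (N - t) (a + t)
        = ∑ c' ∈ univ.filter (fun c' : Composition (N - t) => ∀ i ∈ c'.blocks, i ≤ k),
            z t * q ^ a * ∏ l ∈ Finset.range c'.length,
              z (c'.blocks.getD l 0) * q ^ (a + t + c'.sizeUpTo l) := by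
    intro t _
    rw [majGenPoly, Finset.mul_sum]
  rw [Finset.sum_congr rfl hrw, Finset.sum_sigma', majGenPoly]
  refine Finset.sum_bij' (i := fun c _ => ⟨c.blocks.headI, compTail hN c⟩)
    (j := fun x hx => compCons
        ((mem_Icc.1 (mem_sigma.1 hx).1).1)
        (le_trans (mem_Icc.1 (mem_sigma.1 hx).1).2 (min_le_right _ _)) x.2)
    ?_ ?_ ?_ ?_ ?_
  · -- hi : image in the sigma finset
    intro c hc
    rw [mem_filter] at hc
    obtain ⟨b, l, hb⟩ := List.exists_cons_of_ne_nil (composition_blocks_ne_nil hN c)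
    have hbmem : b ∈ c.blocks := by rw [hb]; exact List.mem_cons_self
    have hpos := c.blocks_pos hbmem
    have hkb : b ≤ k := hc.2 b hbmem
    have hs := c.blocks_sum
    rw [hb, List.sum_cons] at hs
    have hhead : c.blocks.headI = b := by simp [hb]
    have p1 : c.blocks.headI ∈ Icc 1 (min k N) := by
      rw [hhead, mem_Icc, le_min_iff]
      exact ⟨hpos, hkb, by omega⟩
    have p2 : compTail hN c ∈ univ.filter
        (fun c' : Composition (N - c.blocks.headI) => ∀ i ∈ c'.blocks, i ≤ k) := by
      rw [mem_filter]
      exact ⟨mem_univ _, fun i hi => hc.2 i (List.mem_of_mem_tail hi)⟩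
    exact mem_sigma.2 ⟨p1, p2⟩
  · -- hj : image back in the filter
    intro x hx
    rw [mem_filter]
    refine ⟨mem_univ _, ?_⟩
    intro i hi
    rcases List.mem_cons.1 hi with h | h
    · subst h
      exact le_trans (mem_Icc.1 (mem_sigma.1 hx).1).2 (min_le_left _ _)
    · exact (mem_filter.1 (mem_sigma.1 hx).2).2 i h
  · -- left_inv
    intro c hc
    dsimp only
    apply Composition.ext
    obtain ⟨b, l, hb⟩ := List.exists_cons_of_ne_nil (composition_blocks_ne_nil hN c)
    show c.blocks.headI :: c.blocks.tail = c.blocks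
    simp [hb]
  · -- right_inv
    rintro ⟨t, c'⟩ hx
    have ht : 1 ≤ t := (mem_Icc.1 (mem_sigma.1 hx).1).1
    have htN : t ≤ N := le_trans (mem_Icc.1 (mem_sigma.1 hx).1).2 (min_le_right _ _)
    dsimp only
    have key : compTail hN (compCons ht htN c') = c' := Composition.ext rfl
    exact congrArg (Sigma.mk t) key
  · -- term equality
    intro c hc
    dsimp only
    refine prod_aux2 q z a c (compTail hN c) c.blocks.headI c.blocks.tail ?_ rfl
    obtain ⟨b, l, hb⟩ := List.exists_cons_of_ne_nil (composition_blocks_ne_nil hN c)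
    simp [hb]

/-- The first-block recurrence for `majGenPoly`, integer-extended form. -/
private lemma majGenPoly_rec (k : ℕ) (q : R) (z : ℕ → R) (N a : ℕ) (hN : 1 ≤ N) :
    majGenPoly k q z N a =
      ∑ t ∈ Icc 1 k, z t * q ^ a * mgZ k q z ((N : ℤ) - t) (a + t) := by
  rw [majGenPoly_rec' k q z N a hN]
  rw [← Finset.sum_subset (Finset.Icc_subset_Icc_right (min_le_left k N)) ?h0]
  · apply Finset.sum_congr rfl
    intro t ht
    rw [mem_Icc] at ht
    have h1 : ((N : ℤ) - t) = ((N - t : ℕ) : ℤ) := by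
      have : t ≤ N := le_trans ht.2 (min_le_right _ _)
      omega
    rw [h1, mgZ_ofNat]
  case h0 =>
    intro t ht hts
    rw [mem_Icc] at ht hts
    push_neg at hts
    have : (N : ℤ) - t < 0 := by omega
    rw [mgZ_neg k q z _ this, mul_zero]

/-- The sliding family of matrices. -/
private def Amat (k : ℕ) (q : R) (z : ℕ → R) (c m : ℕ) : Matrix (Fin k) (Fin k) R :=
  Matrix.of fun s j => mgZ k q z ((c : ℤ) + (j : ℕ) - m - (s : ℕ)) (m + s)

private lemma Amat_base (k : ℕ) (q : R) (z : ℕ → R) (c : ℕ) :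
    (Amat k q z c c).det = 1 := by
  have htri : (Amat k q z c c).BlockTriangular id := by
    intro s j hij
    have : ((c : ℤ) + (j : ℕ) - c - (s : ℕ)) < 0 := by
      have : (j : ℕ) < (s : ℕ) := hij
      omega
    exact mgZ_neg k q z _ this
  rw [Matrix.det_of_upperTriangular htri]
  have hdiag : ∀ s : Fin k, Amat k q z c c s s = 1 := by
    intro s
    show mgZ k q z ((c : ℤ) + (s : ℕ) - c - (s : ℕ)) (c + s) = 1
    have h0 : ((c : ℤ) + (s : ℕ) - c - (s : ℕ)) = ((0 : ℕ) : ℤ) := by omega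
    rw [h0, mgZ_ofNat, majGenPoly_zero]
  rw [Finset.prod_congr rfl fun s _ => hdiag s]
  simp

private lemma Amat_step (k' : ℕ) (q : R) (z : ℕ → R) (c m : ℕ) (hm : m < c) :
    (Amat (k' + 1) q z c m).det
      = ((-1) ^ k' * z (k' + 1) * q ^ m) * (Amat (k' + 1) q z c (m + 1)).det := by
  set k := k' + 1 with hk
  -- the companion-type matrix, before permuting the rows
  set T : Matrix (Fin k) (Fin k) R := Matrix.of fun s u =>
    if (s : ℕ) = k' then q ^ m * z ((u : ℕ) + 1) else if u = s then 1 else 0 with hT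
  have hσ : ∀ s : Fin k, (((finRotate k).symm s : Fin k) : ℕ)
      = if (s : ℕ) = 0 then k' else (s : ℕ) - 1 := by
    intro s
    by_cases hs : (s : ℕ) = 0
    · have h1 : (finRotate k).symm s = Fin.last k' := by
        rw [Equiv.symm_apply_eq, finRotate_last]
        exact Fin.ext hs
      rw [h1, if_pos hs]
      rfl
    · have hlt : (s : ℕ) - 1 < k := by omega
      have h2 : (⟨(s : ℕ) - 1, hlt⟩ : Fin k) ≠ Fin.last k' := by
        intro h
        have h3 : (s : ℕ) - 1 = k' := by simpa using congrArg Fin.val h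
        have := s.isLt
        omega
      have h1 : (finRotate k).symm s = ⟨(s : ℕ) - 1, hlt⟩ := by
        rw [Equiv.symm_apply_eq]
        apply Fin.ext
        rw [coe_finRotate_of_ne_last h2]
        show (s : ℕ) = (s : ℕ) - 1 + 1
        omega
      rw [h1, if_neg hs]
  have hL : Amat k q z c m = (T.submatrix (⇑(finRotate k).symm) id) * Amat k q z c (m + 1) := by
    ext s j
    rw [Matrix.mul_apply]
    by_cases hs : (s : ℕ) = 0
    · -- first row: apply the recurrence
      have hrow : ∀ u : Fin k, T.submatrix (⇑(finRotate k).symm) id s u = q ^ m * z ((u : ℕ) + 1) := by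
        intro u
        show T ((finRotate k).symm s) u = _
        rw [hT]
        simp only [Matrix.of_apply]
        rw [if_pos (by rw [hσ s, if_pos hs])]
      rw [Finset.sum_congr rfl fun u _ => by rw [hrow u]]
      -- LHS
      set Nn : ℕ := c + j - m with hNn
      have hNn1 : 1 ≤ Nn := by omega
      have hNz : ((c : ℤ) + (j : ℕ) - m - (s : ℕ)) = ((Nn : ℕ) : ℤ) := by
        rw [hs]  -- fails? hs : (s:ℕ) = 0 ; appears as ↑↑s
        omega
      show mgZ k q z ((c : ℤ) + (j : ℕ) - m - (s : ℕ)) (m + s) = _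
      rw [hNz, mgZ_ofNat]
      have hms : m + (s : ℕ) = m := by omega
      rw [hms, majGenPoly_rec k q z Nn m hNn1]
      rw [← Finset.Ico_add_one_right_eq_Icc, Finset.sum_Ico_eq_sum_range, ← Fin.sum_univ_eq_sum_range]
      apply Finset.sum_congr rfl
      intro u _
      show z (1 + u) * q ^ m * mgZ k q z ((Nn : ℤ) - (1 + (u : ℕ))) (m + (1 + u))
          = q ^ m * z ((u : ℕ) + 1) * mgZ k q z ((c : ℤ) + (j : ℕ) - (m + 1) - (u : ℕ)) (m + 1 + u)
      have e1 : ((Nn : ℤ) - (1 + (u : ℕ))) = ((c : ℤ) + (j : ℕ) - (m + 1) - (u : ℕ)) := by omega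
      have e2 : m + (1 + (u : ℕ)) = m + 1 + (u : ℕ) := by omega
      have e3 : 1 + (u : ℕ) = (u : ℕ) + 1 := by omega
      rw [e1, e2, e3]
      ring
    · -- other rows: the permuted matrix row is a delta
      have hs1 : 1 ≤ (s : ℕ) := by omega
      have hlt : (s : ℕ) - 1 < k := by omega
      set s' : Fin k := ⟨(s : ℕ) - 1, hlt⟩ with hs'
      have hσs : (finRotate k).symm s = s' := by
        apply Fin.ext
        rw [hσ s, if_neg hs]
      have hval : (s' : ℕ) = (s : ℕ) - 1 := rfl
      have hrow : ∀ u : Fin k, T.submatrix (⇑(finRotate k).symm) id s u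
          = if u = s' then 1 else 0 := by
        intro u
        show T ((finRotate k).symm s) u = _
        rw [hσs, hT]
        simp only [Matrix.of_apply]
        rw [if_neg (show ¬((s' : ℕ) = k') by rw [hval]; have := s.isLt; omega)]
      rw [Finset.sum_congr rfl fun u _ => by rw [hrow u]]
      simp only [ite_mul, one_mul, zero_mul, Finset.sum_ite_eq', Finset.mem_univ, if_true]
      show mgZ k q z ((c : ℤ) + (j : ℕ) - m - (s : ℕ)) (m + s)
          = mgZ k q z ((c : ℤ) + (j : ℕ) - (m + 1) - ((s' : ℕ) : ℤ)) (m + 1 + (s' : ℕ))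
      have e2 : m + 1 + (s' : ℕ) = m + (s : ℕ) := by rw [hval]; omega
      have e1 : ((c : ℤ) + (j : ℕ) - (m + 1) - ((s' : ℕ) : ℤ))
          = ((c : ℤ) + (j : ℕ) - m - (s : ℕ)) := by
        rw [hval]
        omega
      rw [e1, e2]
  rw [hL, Matrix.det_mul, Matrix.det_permute]
  have hsign : (Equiv.Perm.sign ((finRotate k).symm) : R) = (-1) ^ k' := by
    have : Equiv.Perm.sign ((finRotate k).symm) = Equiv.Perm.sign (finRotate k) := by
      rw [show ((finRotate k).symm) = (finRotate k)⁻¹ from rfl, Equiv.Perm.sign_inv]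
    rw [this, sign_finRotate]
    simp
    rfl
  have hdetT : T.det = q ^ m * z k := by
    have htri : T.BlockTriangular OrderDual.toDual := by
      intro a b hab
      have hab' : (a : ℕ) < (b : ℕ) := hab
      rw [hT]
      simp only [Matrix.of_apply]
      rw [if_neg (by have := b.isLt; omega), if_neg (by intro h; rw [h] at hab'; omega)]
    rw [Matrix.det_of_lowerTriangular T htri]
    have hd : ∀ a : Fin k, T a a = if a = Fin.last k' then q ^ m * z k else 1 := by
      intro a
      rw [hT]
      simp only [Matrix.of_apply]
      by_cases ha : a = Fin.last k'
      · have hav : (a : ℕ) = k' := by rw [ha]; rfl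
        rw [if_pos hav, if_pos ha, hav]
      · have hav : ¬((a : ℕ) = k') := by
          intro h
          exact ha (Fin.ext (by simpa using h))
        rw [if_neg hav]
        simp [ha]
    rw [Finset.prod_congr rfl fun a _ => hd a]
    rw [Finset.prod_ite_eq' Finset.univ (Fin.last k') (fun _ => q ^ m * z k)]
    simp
  rw [hsign, hdetT]
  ring

private lemma Amat_det (k' : ℕ) (q : R) (z : ℕ → R) (c : ℕ) :
    ∀ d, d ≤ c → (Amat (k' + 1) q z c (c - d)).det
      = ((-1) ^ k' * z (k' + 1)) ^ d * q ^ (∑ m ∈ Finset.Ico (c - d) c, m) := by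
  intro d
  induction d with
  | zero =>
    intro _
    simp [Amat_base]
  | succ d ih =>
    intro hd
    have h1 : c - (d + 1) < c := by omega
    have h2 : c - (d + 1) + 1 = c - d := by omega
    rw [Amat_step k' q z c (c - (d + 1)) h1, h2, ih (by omega)]
    have h3 : Finset.Ico (c - (d + 1)) c = insert (c - (d + 1)) (Finset.Ico (c - d) c) := by
      rw [← h2]
      exact (Finset.insert_Ico_add_one_left_eq_Ico h1).symm
    rw [h3, Finset.sum_insert (by rw [Finset.mem_Ico]; omega)]
    rw [pow_add, pow_succ]
    ring

end aux

/-- Let `k ≥ 1` and `n ≥ 1` and let `M` be the `k × k` matrix over `R`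
whose `(i,j)` entry is `G(n+k-1+j-i, i)`. Then
`det M = ε · z_k^(n+k-1) · q^(C(n+k-1,2))`, where `ε = 1` if `k` is odd and
`ε = (-1)^(n-1)` if `k` is even. -/
theorem majGenPoly_toeplitz_determinant {R : Type*} [CommRing R] (k : ℕ) (hk : 1 ≤ k)
    (q : R) (z : ℕ → R) (n : ℕ) (hn : 1 ≤ n) :
    Matrix.det (Matrix.of fun i j : Fin k =>
        majGenPoly k q z (n + k - 1 + (j : ℕ) - (i : ℕ)) (i : ℕ))
      = (if Odd k then 1 else (-1) ^ (n - 1)) *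
          z k ^ (n + k - 1) * q ^ Nat.choose (n + k - 1) 2 := by
  obtain ⟨k', rfl⟩ : ∃ k', k = k' + 1 := ⟨k - 1, by omega⟩
  set c := n + k' with hc
  have hMA : Matrix.of (fun i j : Fin (k' + 1) =>
      majGenPoly (k' + 1) q z (n + (k' + 1) - 1 + (j : ℕ) - (i : ℕ)) (i : ℕ))
      = Amat (k' + 1) q z c 0 := by
    ext i j
    show majGenPoly (k' + 1) q z (n + (k' + 1) - 1 + (j : ℕ) - (i : ℕ)) (i : ℕ)
        = mgZ (k' + 1) q z ((c : ℤ) + (j : ℕ) - 0 - (i : ℕ)) (0 + i)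
    have hi := i.isLt
    have e1 : ((c : ℤ) + (j : ℕ) - 0 - (i : ℕ))
        = ((n + (k' + 1) - 1 + (j : ℕ) - (i : ℕ) : ℕ) : ℤ) := by omega
    rw [e1, mgZ_ofNat]
    congr 1
    omega
  have hdet := Amat_det k' q z c c le_rfl
  rw [Nat.sub_self] at hdet
  rw [hMA, hdet]
  have e2 : n + (k' + 1) - 1 = c := by omega
  rw [e2]
  have e3 : ∑ m ∈ Finset.Ico 0 c, m = Nat.choose c 2 := by
    rw [← Finset.range_eq_Ico, Finset.sum_range_id, Nat.choose_two_right]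
  rw [e3, mul_pow]
  have hsign : ((-1 : R) ^ k') ^ c = (if Odd (k' + 1) then (1 : R) else (-1) ^ (n - 1)) := by
    rcases Nat.even_or_odd k' with he | ho
    · rw [he.neg_one_pow, one_pow, if_pos (Even.add_one he)]
    · rw [ho.neg_one_pow, if_neg (by simpa using Odd.add_one ho)]
      obtain ⟨a, ha⟩ := ho
      have e4 : c = (n - 1) + 2 * (a + 1) := by omega
      rw [e4, pow_add, pow_mul]
      simp
  rw [hsign]
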